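/- arXiv:2103.04793 — 8 statements merged into one kernel-verified Lean document; each statement's English description precedes it below -/
import Mathlib

section
/- Let f : A → B be a function between sets, and let F(f) : F(A) → F(B) be the induced homomorphism between free groups. Then the kernel of F(f) equals the set K(F(f)) of F(f)-symmetric paths with respect to the generating set A ⊆ F(A). -/
/-- `ga` and `gb` are `f`-symmetric with respect to the subset `A`. -/
def IsSymmPair {G H : Type*} [Group G] [Group H] (f : G →* H) (A : Set G)
    (ga gb : G) : Prop :=
  ∃ (n : ℕ) (a b : Fin n → G) (δ : Fin n → ℤ),
    (∀ i, a i ∈ A ∧ b i ∈ A ∧ f (a i) = f (b i) ∧ (δ i = 1 ∨ δ i = -1)) ∧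
    ga = (List.ofFn fun i => a i ^ δ i).prod ∧
    gb = (List.ofFn fun i => b i ^ δ i).prod

/-- The set of `f`-symmetric paths with respect to `A`. -/
def symmPaths {G H : Type*} [Group G] [Group H] (f : G →* H) (A : Set G) : Set G :=
  {g | ∃ ga gb : G, IsSymmPair f A ga gb ∧ g = ga * gb⁻¹}

section Aux

variable {G H : Type*} [Group G] [Group H] (f : G →* H) (A : Set G)

/-- entry predicate -/
def SymmEntry (p : G × G × ℤ) : Prop :=
  p.1 ∈ A ∧ p.2.1 ∈ A ∧ f p.1 = f p.2.1 ∧ (p.2.2 = 1 ∨ p.2.2 = -1)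

lemma isSymmPair_iff_list {ga gb : G} :
    IsSymmPair f A ga gb ↔ ∃ L : List (G × G × ℤ),
      (∀ p ∈ L, SymmEntry f A p) ∧
      ga = (L.map fun p => p.1 ^ p.2.2).prod ∧
      gb = (L.map fun p => p.2.1 ^ p.2.2).prod := by
  constructor
  · rintro ⟨n, a, b, δ, hcond, hga, hgb⟩
    refine ⟨List.ofFn fun i => (a i, b i, δ i), ?_, ?_, ?_⟩
    · intro p hp
      rw [List.mem_ofFn] at hp
      obtain ⟨i, rfl⟩ := hp
      exact hcond i
    · rw [List.map_ofFn]; exact hga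
    · rw [List.map_ofFn]; exact hgb
  · rintro ⟨L, hcond, hga, hgb⟩
    refine ⟨L.length, fun i => (L.get i).1, fun i => (L.get i).2.1,
      fun i => (L.get i).2.2, fun i => hcond _ (L.get_mem i), ?_, ?_⟩
    · have h := (List.map_ofFn (f := L.get) (g := fun p => p.1 ^ p.2.2)).symm
      rw [List.ofFn_get] at h
      rw [hga]
      exact (congrArg List.prod h).symm
    · have h := (List.map_ofFn (f := L.get) (g := fun p => p.2.1 ^ p.2.2)).symm
      rw [List.ofFn_get] at h
      rw [hgb]
      exact (congrArg List.prod h).symm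

lemma mem_symmPaths_iff_list {g : G} :
    g ∈ symmPaths f A ↔ ∃ L : List (G × G × ℤ),
      (∀ p ∈ L, SymmEntry f A p) ∧
      g = (L.map fun p => p.1 ^ p.2.2).prod * ((L.map fun p => p.2.1 ^ p.2.2).prod)⁻¹ := by
  constructor
  · rintro ⟨ga, gb, hp, rfl⟩
    obtain ⟨L, h1, rfl, rfl⟩ := (isSymmPair_iff_list f A).1 hp
    exact ⟨L, h1, rfl⟩
  · rintro ⟨L, h1, rfl⟩
    exact ⟨_, _, (isSymmPair_iff_list f A).2 ⟨L, h1, rfl, rfl⟩, rfl⟩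

lemma prod_map_inv {X : Type*} (gfun : X → G) :
    ∀ L : List X, ((L.map gfun).prod)⁻¹ = (L.reverse.map fun x => (gfun x)⁻¹).prod := by
  intro L
  induction L with
  | nil => simp
  | cons p L ih => simp [ih]

/-- symmPaths as a subgroup -/
def symmSubgroup : Subgroup G where
  carrier := symmPaths f A
  one_mem' := by
    rw [mem_symmPaths_iff_list]
    exact ⟨[], by simp, by simp⟩
  mul_mem' := by
    intro x y hx hy
    rw [mem_symmPaths_iff_list] at hx hy ⊢
    obtain ⟨L₁, h1, rfl⟩ := hx
    obtain ⟨L₂, h2, rfl⟩ := hy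
    refine ⟨L₁ ++ (L₁.reverse.map fun p => (p.2.1, p.2.1, -p.2.2)) ++ L₂, ?_, ?_⟩
    · intro p hp
      simp only [List.mem_append, List.mem_map, List.mem_reverse] at hp
      rcases hp with (hp | ⟨q, hq, rfl⟩) | hp
      · exact h1 p hp
      · obtain ⟨_, hq2, _, hq4⟩ := h1 q hq
        refine ⟨hq2, hq2, rfl, ?_⟩
        rcases hq4 with h | h <;> simp [h]
      · exact h2 p hp
    · simp only [List.map_append, List.prod_append, List.map_map]
      have key1 : (L₁.reverse.map ((fun p : G × G × ℤ => p.1 ^ p.2.2) ∘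
          fun p => (p.2.1, p.2.1, -p.2.2))).prod =
          ((L₁.map fun p => p.2.1 ^ p.2.2).prod)⁻¹ := by
        rw [prod_map_inv (fun p : G × G × ℤ => p.2.1 ^ p.2.2) L₁]
        congr 1
        apply List.map_congr_left
        intro p _
        simp [zpow_neg]
      have key2 : (L₁.reverse.map ((fun p : G × G × ℤ => p.2.1 ^ p.2.2) ∘
          fun p => (p.2.1, p.2.1, -p.2.2))).prod =
          ((L₁.map fun p => p.2.1 ^ p.2.2).prod)⁻¹ := by
        rw [prod_map_inv (fun p : G × G × ℤ => p.2.1 ^ p.2.2) L₁]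
        congr 1
        apply List.map_congr_left
        intro p _
        simp [zpow_neg]
      rw [key1, key2]
      group
  inv_mem' := by
    intro x hx
    rw [mem_symmPaths_iff_list] at hx ⊢
    obtain ⟨L, h1, rfl⟩ := hx
    refine ⟨L.map fun p => (p.2.1, p.1, p.2.2), ?_, ?_⟩
    · intro p hp
      simp only [List.mem_map] at hp
      obtain ⟨q, hq, rfl⟩ := hp
      obtain ⟨hq1, hq2, hq3, hq4⟩ := h1 q hq
      exact ⟨hq2, hq1, hq3.symm, hq4⟩
    · simp only [List.map_map]
      rw [mul_inv_rev, inv_inv]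
      rfl

end Aux

section FG

variable {A B : Type} (f : A → B)

lemma symmPaths_conj {g : FreeGroup A} (w : FreeGroup A)
    (hg : g ∈ symmPaths (FreeGroup.map f) (Set.range (FreeGroup.of : A → FreeGroup A))) :
    w * g * w⁻¹ ∈ symmPaths (FreeGroup.map f) (Set.range (FreeGroup.of : A → FreeGroup A)) := by
  induction w using FreeGroup.induction_on generalizing g with
  | C1 => simpa using hg
  | of x =>
    show FreeGroup.of x * g * (FreeGroup.of x)⁻¹ ∈ _
    rw [mem_symmPaths_iff_list] at hg ⊢
    obtain ⟨L, h1, rfl⟩ := hg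
    refine ⟨(FreeGroup.of x, FreeGroup.of x, 1) :: L ++ [(FreeGroup.of x, FreeGroup.of x, -1)], ?_, ?_⟩
    · intro p hp
      simp only [List.cons_append, List.mem_cons, List.mem_append, List.mem_singleton,
        List.not_mem_nil, or_false] at hp
      rcases hp with rfl | hp | rfl
      · exact ⟨⟨x, rfl⟩, ⟨x, rfl⟩, rfl, Or.inl rfl⟩
      · exact h1 p hp
      · exact ⟨⟨x, rfl⟩, ⟨x, rfl⟩, rfl, Or.inr rfl⟩
    · simp only [List.cons_append, List.map_cons, List.prod_cons, List.map_append,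
        List.prod_append, List.map_nil, List.prod_nil, List.map_singleton, List.prod_singleton]
      group
  | inv_of x _ =>
    show (FreeGroup.of x)⁻¹ * g * (FreeGroup.of x)⁻¹⁻¹ ∈ _
    rw [mem_symmPaths_iff_list] at hg ⊢
    obtain ⟨L, h1, rfl⟩ := hg
    refine ⟨(FreeGroup.of x, FreeGroup.of x, -1) :: L ++ [(FreeGroup.of x, FreeGroup.of x, 1)], ?_, ?_⟩
    · intro p hp
      simp only [List.cons_append, List.mem_cons, List.mem_append, List.mem_singleton,
        List.not_mem_nil, or_false] at hp
      rcases hp with rfl | hp | rfl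
      · exact ⟨⟨x, rfl⟩, ⟨x, rfl⟩, rfl, Or.inr rfl⟩
      · exact h1 p hp
      · exact ⟨⟨x, rfl⟩, ⟨x, rfl⟩, rfl, Or.inl rfl⟩
    · simp only [List.cons_append, List.map_cons, List.prod_cons, List.map_append,
        List.prod_append, List.map_nil, List.prod_nil, List.map_singleton, List.prod_singleton]
      group
  | mul x y hx hy =>
    have : x * y * g * (x * y)⁻¹ = x * (y * g * y⁻¹) * x⁻¹ := by group
    rw [this]
    exact hx (hy hg)

end FG

theorem ker_freeGroupMap_eq_symmPaths {A B : Type} (f : A → B) :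
    ((FreeGroup.map f).ker : Set (FreeGroup A)) =
      symmPaths (FreeGroup.map f) (Set.range (FreeGroup.of : A → FreeGroup A)) := by
  set F := FreeGroup.map f
  set S : Subgroup (FreeGroup A) := symmSubgroup F (Set.range (FreeGroup.of : A → FreeGroup A))
  have hScar : (S : Set (FreeGroup A)) = symmPaths F (Set.range (FreeGroup.of : A → FreeGroup A)) := rfl
  have hSnormal : S.Normal := by
    constructor
    intro g hg w
    exact symmPaths_conj f w hg
  ext g
  constructor
  · -- kernel ⊆ symmPaths
    intro hg
    rw [SetLike.mem_coe, MonoidHom.mem_ker] at hg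
    classical
    set π := QuotientGroup.mk' S with hπ
    set ψ := FreeGroup.lift (fun b : B =>
      if hb : ∃ a : A, f a = b then π (FreeGroup.of hb.choose) else 1) with hψ
    have key : ∀ a : A, ψ (F (FreeGroup.of a)) = π (FreeGroup.of a) := by
      intro a
      have hfa : ∃ a' : A, f a' = f a := ⟨a, rfl⟩
      rw [show F (FreeGroup.of a) = FreeGroup.of (f a) from FreeGroup.map.of, hψ,
        FreeGroup.lift_apply_of, dif_pos hfa]
      have hc : f hfa.choose = f a := hfa.choose_spec
      rw [QuotientGroup.mk'_eq_mk']
      refine ⟨(FreeGroup.of hfa.choose)⁻¹ * FreeGroup.of a, ?_, by group⟩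
      show _ ∈ symmPaths F _
      rw [mem_symmPaths_iff_list]
      refine ⟨[(FreeGroup.of hfa.choose, FreeGroup.of a, -1)], ?_, by simp [zpow_neg]⟩
      rintro p hp
      simp only [List.mem_singleton] at hp
      subst hp
      refine ⟨⟨hfa.choose, rfl⟩, ⟨a, rfl⟩, ?_, Or.inr rfl⟩
      show F _ = F _
      rw [show F (FreeGroup.of hfa.choose) = FreeGroup.of (f hfa.choose) from FreeGroup.map.of,
        show F (FreeGroup.of a) = FreeGroup.of (f a) from FreeGroup.map.of, hc]
    have comp : ψ.comp F = π := by
      apply FreeGroup.ext_hom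
      intro a
      exact key a
    have hπg : π g = 1 := by
      have h0 := congrArg (fun φ => φ g) comp
      simp only [MonoidHom.comp_apply] at h0
      rw [← h0, hg, map_one]
    exact (QuotientGroup.eq_one_iff g).mp hπg
  · intro hg
    rw [SetLike.mem_coe, MonoidHom.mem_ker]
    rw [mem_symmPaths_iff_list] at hg
    obtain ⟨L, h1, rfl⟩ := hg
    rw [map_mul, map_inv, map_list_prod, map_list_prod, List.map_map, List.map_map]
    have : (L.map (F ∘ fun p => p.1 ^ p.2.2)) = (L.map (F ∘ fun p => p.2.1 ^ p.2.2)) := by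
      apply List.map_congr_left
      intro p hp
      obtain ⟨_, _, h3, _⟩ := h1 p hp
      simp [Function.comp, map_zpow, h3]
    rw [this, mul_inv_cancel]
end

section
/- Let f : A → B be a function between sets. Then the kernel of the induced homomorphism F(f) : F(A) → F(B) between free groups equals the normal closure in F(A) of the set { a·b⁻¹ | a, b ∈ A, f(a) = f(b) }. -/
theorem ker_freeGroupMap_eq_normalClosure {A B : Type} (f : A → B) :
    (FreeGroup.map f).ker =
      Subgroup.normalClosure
        {x : FreeGroup A | ∃ a b : A, f a = f b ∧
          x = FreeGroup.of a * (FreeGroup.of b)⁻¹} := by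
  set S : Set (FreeGroup A) := {x : FreeGroup A | ∃ a b : A, f a = f b ∧
          x = FreeGroup.of a * (FreeGroup.of b)⁻¹} with hS
  set N := Subgroup.normalClosure S with hN
  apply le_antisymm
  · -- hard direction
    -- setoid on A
    let s : Setoid A := Setoid.ker f
    let Q := Quotient s
    let π : A → Q := Quotient.mk s
    let ι : Q → B := Quotient.lift f (fun a b h => h)
    have hιπ : ∀ a, ι (π a) = f a := fun a => rfl
    have hι_inj : Function.Injective ι := by
      rintro ⟨a⟩ ⟨b⟩ h
      exact Quotient.sound (h : f a = f b)
    -- map to quotient group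
    letI : Subgroup.Normal N := Subgroup.normalClosure_normal
    let mk' : FreeGroup A →* FreeGroup A ⧸ N := QuotientGroup.mk' N
    have hwd : ∀ a b : A, a ≈ b → mk' (FreeGroup.of a) = mk' (FreeGroup.of b) := by
      intro a b hab
      have : FreeGroup.of a * (FreeGroup.of b)⁻¹ ∈ N :=
        Subgroup.subset_normalClosure ⟨a, b, hab, rfl⟩
      have h1 : mk' (FreeGroup.of a * (FreeGroup.of b)⁻¹) = 1 :=
        (QuotientGroup.eq_one_iff _).2 this
      rw [map_mul, map_inv] at h1
      exact mul_inv_eq_one.mp h1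
    let σ : Q → FreeGroup A ⧸ N := Quotient.lift (fun a => mk' (FreeGroup.of a)) hwd
    let Φ : FreeGroup Q →* FreeGroup A ⧸ N := FreeGroup.lift σ
    have key : ∀ x : FreeGroup A, Φ (FreeGroup.map π x) = mk' x := by
      intro x
      have : Φ.comp (FreeGroup.map π) = mk' := by
        apply FreeGroup.ext_hom
        intro a
        rw [MonoidHom.comp_apply, FreeGroup.map.of, FreeGroup.lift_apply_of]
        rfl
      exact DFunLike.congr_fun this x
    intro x hx
    have hx1 : FreeGroup.map f x = 1 := hx
    have hπ1 : FreeGroup.map π x = 1 := by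
      by_cases hQ : Nonempty Q
      · obtain ⟨r, hr⟩ := hι_inj.hasLeftInverse
        have hcomp : FreeGroup.map ι (FreeGroup.map π x) = FreeGroup.map f x := by
          rw [FreeGroup.map.comp, show ι ∘ π = f from funext hιπ]
        have : FreeGroup.map r (FreeGroup.map ι (FreeGroup.map π x))
            = FreeGroup.map π x := by
          rw [FreeGroup.map.comp]
          have h2 : (r ∘ ι) = id := funext hr
          rw [h2, FreeGroup.map.id]
        rw [hcomp, hx1, map_one] at this
        exact this.symm
      · haveI : IsEmpty Q := not_nonempty_iff.mp hQ
        exact Subsingleton.elim _ _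
    have : mk' x = 1 := by rw [← key, hπ1, map_one]
    exact (QuotientGroup.eq_one_iff x).mp this
  · -- easy direction
    rw [hN]
    apply Subgroup.normalClosure_le_normal
    rintro x ⟨a, b, hab, rfl⟩
    simp [MonoidHom.mem_ker, hab]
end

section
/- Let f : A → B be a function and let ν = a₁^{δ₁}⋯a_n^{δ_n} be a word in the letters A ∪ A⁻¹ representing an element g of the free group F(A) with g ∈ Ker(F(f)). Then n is even, and there exists a perfect matching of the letter positions {1,…,n} into pairs (i,j) with i < j such that f(aᵢ) = f(a_j), δᵢ = −δ_j, and the matching is non-crossing: for any two matched pairs (i,j) and (l,m) with l < i, one has m > j or m < i. -/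
/-- A fixpoint-free involution `p` of `Fin n` (a perfect matching of positions)
is non-crossing if no two matched pairs interleave as `i < j < p i < p j`. -/
def NonCrossing {n : ℕ} (p : Fin n → Fin n) : Prop :=
  ∀ i j : Fin n, i < p i → j < p j → i < j → j < p i → p j < p i

namespace NCAux

def liftIdx (k j : ℕ) : ℕ := if j < k then j else j + 2

def dropIdx (k i : ℕ) : ℕ := if i < k then i else i - 2

lemma lift_lt_lift {k j₁ j₂ : ℕ} : liftIdx k j₁ < liftIdx k j₂ ↔ j₁ < j₂ := by
  unfold liftIdx; split <;> split <;> omega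

lemma lift_ne_k {k j : ℕ} : liftIdx k j ≠ k ∧ liftIdx k j ≠ k + 1 := by
  unfold liftIdx; split <;> omega

lemma drop_lift {k j : ℕ} : dropIdx k (liftIdx k j) = j := by
  unfold liftIdx dropIdx; split <;> (try split) <;> omega

lemma lift_drop {k i : ℕ} (h1 : i ≠ k) (h2 : i ≠ k + 1) :
    liftIdx k (dropIdx k i) = i := by
  unfold liftIdx dropIdx; split <;> (try split) <;> omega

lemma prod_mk {B : Type} (M : List (B × Bool)) :
    (M.map fun q => FreeGroup.mk [q]).prod = FreeGroup.mk M := by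
  induction M with
  | nil => simp [← FreeGroup.one_eq_mk]
  | cons q M ih =>
      rw [List.map_cons, List.prod_cons, ih, FreeGroup.mul_mk]
      rfl

theorem matching_of_red {B : Type} :
    ∀ N (L : List (B × Bool)), L.length ≤ N → FreeGroup.Red L [] →
      Even L.length ∧ ∃ p : ℕ → ℕ,
        (∀ i, i < L.length → p i < L.length) ∧
        (∀ i, i < L.length → p (p i) = i) ∧
        (∀ i, i < L.length → p i ≠ i) ∧
        (∀ i, i < L.length → ∃ x c, L[i]? = some (x, c) ∧ L[p i]? = some (x, !c)) ∧
        (∀ i j, i < L.length → j < L.length →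
          i < p i → j < p j → i < j → j < p i → p j < p i) := by
  intro N
  induction N with
  | zero =>
      intro L hL _
      have : L = [] := List.length_eq_zero_iff.mp (Nat.le_zero.mp hL)
      subst this
      refine ⟨by simp, id, ?_, ?_, ?_, ?_, ?_⟩ <;> intro i <;>
        first
          | (intro hi; exact absurd hi (by simp))
          | (intro j hi; exact absurd hi (by simp))
  | succ N ih =>
      intro L hL hred
      rcases hred.cases_head with rfl | ⟨c, hstep, hred'⟩
      · refine ⟨by simp, id, ?_, ?_, ?_, ?_, ?_⟩ <;> intro i <;>
          first
            | (intro hi; exact absurd hi (by simp))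
            | (intro j hi; exact absurd hi (by simp))
      cases hstep with
      | @not L₁ L₂ x b =>
        set k := L₁.length with hk
        set m := L₂.length with hm
        have hL'len : (L₁ ++ L₂).length = k + m := by simp [hk, hm]
        have hLlen : (L₁ ++ (x, b) :: (x, !b) :: L₂).length = k + m + 2 := by
          simp; omega
        obtain ⟨hev, p', hb, hinv, hne, hlet, hnc⟩ :=
          ih (L₁ ++ L₂) (by rw [hLlen] at hL; omega) hred'
        rw [hL'len] at hev hb hinv hne hlet hnc
        -- index transfer for getElem?
        have hget : ∀ j, (L₁ ++ L₂)[j]? = (L₁ ++ (x, b) :: (x, !b) :: L₂)[liftIdx k j]? := by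
          intro j
          by_cases hj : j < k
          · rw [liftIdx, if_pos hj]
            simp only [List.getElem?_append, ← hk]
            rw [if_pos hj, if_pos hj]
          · rw [liftIdx, if_neg hj]
            simp only [List.getElem?_append, ← hk]
            rw [if_neg hj, if_neg (by omega)]
            have h2 : j + 2 - k = (j - k) + 2 := by omega
            rw [h2]
            simp
        have hgk : (L₁ ++ (x, b) :: (x, !b) :: L₂)[k]? = some (x, b) := by
          simp only [List.getElem?_append, ← hk]
          rw [if_neg (by omega)]
          simp
        have hgk1 : (L₁ ++ (x, b) :: (x, !b) :: L₂)[k + 1]? = some (x, !b) := by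
          simp only [List.getElem?_append, ← hk]
          rw [if_neg (by omega)]
          have h2 : k + 1 - k = 1 := by omega
          rw [h2]; simp
        set p : ℕ → ℕ := fun i =>
          if i = k then k + 1 else if i = k + 1 then k
          else liftIdx k (p' (dropIdx k i)) with hpdef
        have hpk : p k = k + 1 := by simp [hpdef]
        have hpk1 : p (k + 1) = k := by simp [hpdef]
        have hpo : ∀ i, i ≠ k → i ≠ k + 1 → p i = liftIdx k (p' (dropIdx k i)) := by
          intro i h1 h2; simp [hpdef, h1, h2]
        have hdropb : ∀ i, i < k + m + 2 → i ≠ k → i ≠ k + 1 → dropIdx k i < k + m := by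
          intro i hi h1 h2; unfold dropIdx; split <;> omega
        have hliftb : ∀ j, j < k + m → liftIdx k j < k + m + 2 := by
          intro j hj; unfold liftIdx; split <;> omega
        refine ⟨?_, p, ?_, ?_, ?_, ?_, ?_⟩
        · rw [hLlen]; exact hev.add even_two
        · -- bound
          intro i hi; rw [hLlen] at hi ⊢
          by_cases h1 : i = k
          · rw [h1, hpk]; omega
          by_cases h2 : i = k + 1
          · rw [h2, hpk1]; omega
          · rw [hpo i h1 h2]
            exact hliftb _ (hb _ (hdropb i hi h1 h2))
        · -- involutive
          intro i hi; rw [hLlen] at hi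
          by_cases h1 : i = k
          · rw [h1, hpk, hpk1]
          by_cases h2 : i = k + 1
          · rw [h2, hpk1, hpk]
          · have hd := hdropb i hi h1 h2
            rw [hpo i h1 h2, hpo _ (lift_ne_k).1 (lift_ne_k).2, drop_lift,
              hinv _ hd, lift_drop h1 h2]
        · -- no fixed point
          intro i hi; rw [hLlen] at hi
          by_cases h1 : i = k
          · rw [h1, hpk]; omega
          by_cases h2 : i = k + 1
          · rw [h2, hpk1]; omega
          · rw [hpo i h1 h2]
            intro h
            apply hne _ (hdropb i hi h1 h2)
            have := congrArg (dropIdx k) h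
            rw [drop_lift] at this
            exact this
        · -- letters
          intro i hi; rw [hLlen] at hi
          by_cases h1 : i = k
          · exact ⟨x, b, by rw [h1]; exact hgk, by rw [h1, hpk]; exact hgk1⟩
          by_cases h2 : i = k + 1
          · refine ⟨x, !b, by rw [h2]; exact hgk1, ?_⟩
            rw [h2, hpk1, Bool.not_not]; exact hgk
          · obtain ⟨y, c, hc1, hc2⟩ := hlet (dropIdx k i) (hdropb i hi h1 h2)
            refine ⟨y, c, ?_, ?_⟩
            · rw [← lift_drop h1 h2, ← hget]; exact hc1
            · rw [hpo i h1 h2, ← hget]; exact hc2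
        · -- non-crossing
          intro i j hi hj hipi hjpj hij hjpi
          rw [hLlen] at hi hj
          by_cases hjk : j = k
          · subst hjk
            rw [hpk]
            have h1 : i ≠ k := by omega
            have h2 : i ≠ k + 1 := by omega
            rw [hpo i h1 h2] at hjpi ⊢
            have := @lift_ne_k k (p' (dropIdx k i))
            omega
          by_cases hjk1 : j = k + 1
          · rw [hjk1, hpk1] at hjpj; omega
          by_cases hik : i = k
          · rw [hik, hpk] at hjpi; omega
          by_cases hik1 : i = k + 1
          · rw [hik1, hpk1] at hipi; omega
          · have hdi := hdropb i hi hik hik1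
            have hdj := hdropb j hj hjk hjk1
            rw [hpo i hik hik1] at hipi hjpi ⊢
            rw [hpo j hjk hjk1] at hjpj ⊢
            have hipi' : dropIdx k i < p' (dropIdx k i) := by
              rw [← lift_lt_lift (k := k), lift_drop hik hik1]; exact hipi
            have hjpj' : dropIdx k j < p' (dropIdx k j) := by
              rw [← lift_lt_lift (k := k), lift_drop hjk hjk1]; exact hjpj
            have hij' : dropIdx k i < dropIdx k j := by
              rw [← lift_lt_lift (k := k), lift_drop hik hik1, lift_drop hjk hjk1]
              exact hij
            have hjpi' : dropIdx k j < p' (dropIdx k i) := by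
              rw [← lift_lt_lift (k := k), lift_drop hjk hjk1]; exact hjpi
            rw [lift_lt_lift]
            exact hnc _ _ hdi hdj hipi' hjpj' hij' hjpi'

end NCAux

theorem exists_noncrossing_matching_of_mem_ker {A B : Type} (f : A → B)
    (n : ℕ) (a : Fin n → A) (δ : Fin n → ℤ)
    (hδ : ∀ i, δ i = 1 ∨ δ i = -1)
    (hg : (List.ofFn fun i => FreeGroup.of (a i) ^ δ i).prod ∈ (FreeGroup.map f).ker) :
    Even n ∧
      ∃ p : Fin n → Fin n, Function.Involutive p ∧ (∀ i, p i ≠ i) ∧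
        (∀ i, f (a (p i)) = f (a i)) ∧ (∀ i, δ (p i) = -δ i) ∧ NonCrossing p := by
  classical
  have h1 : FreeGroup.map f ((List.ofFn fun i => FreeGroup.of (a i) ^ δ i).prod) = 1 :=
    hg
  set e : Fin n → Bool := fun i => decide (δ i = 1) with he
  set L : List (B × Bool) := List.ofFn fun i => (f (a i), e i) with hLdef
  have hLlen : L.length = n := by simp [hLdef]
  have h2 : FreeGroup.mk L = 1 := by
    rw [← h1, map_list_prod, List.map_ofFn]
    have h3 : ∀ i, (FreeGroup.map f) ((FreeGroup.of (a i)) ^ δ i)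
        = FreeGroup.mk [(f (a i), e i)] := by
      intro i
      rcases hδ i with h | h
      · rw [h, zpow_one, FreeGroup.map.of]
        simp [he, h, FreeGroup.of]
      · rw [h, zpow_neg_one, map_inv, FreeGroup.map.of, FreeGroup.of,
          FreeGroup.inv_mk]
        simp [FreeGroup.invRev, he, h]
    have : (List.ofFn ((FreeGroup.map f) ∘ fun i => FreeGroup.of (a i) ^ δ i))
        = L.map fun q => FreeGroup.mk [q] := by
      rw [hLdef, List.map_ofFn]
      exact congrArg List.ofFn (funext fun i => h3 i)
    rw [this, NCAux.prod_mk]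
  have h4 : FreeGroup.Red L [] := by
    have hr : FreeGroup.reduce L = [] := by
      have := congrArg FreeGroup.toWord h2
      rwa [FreeGroup.toWord_mk, FreeGroup.toWord_one] at this
    rw [← hr]
    exact FreeGroup.reduce.red
  obtain ⟨hev, p, hb, hinv, hne, hlet, hnc⟩ :=
    NCAux.matching_of_red L.length L le_rfl h4
  rw [hLlen] at hev hb hinv hne hlet hnc
  have hLget : ∀ (i : ℕ) (h : i < n), L[i]? = some (f (a ⟨i, h⟩), e ⟨i, h⟩) := by
    intro i h
    rw [hLdef, List.getElem?_eq_getElem (by simpa using h), List.getElem_ofFn]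
  set P : Fin n → Fin n := fun i => ⟨p i.val, hb i.val i.isLt⟩ with hP
  have hlet' : ∀ i : Fin n, f (a (P i)) = f (a i) ∧ e (P i) = !(e i) := by
    intro i
    obtain ⟨y, c, hc1, hc2⟩ := hlet i.val i.isLt
    rw [hLget i.val i.isLt] at hc1
    rw [hLget (p i.val) (hb i.val i.isLt)] at hc2
    rw [Fin.eta] at hc1
    have hc1' := Option.some.inj hc1
    have hc2' := Option.some.inj hc2
    have e1 : f (a i) = y := congrArg Prod.fst hc1'
    have e2 : e i = c := congrArg Prod.snd hc1'
    have e3 : f (a (P i)) = y := congrArg Prod.fst hc2'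
    have e4 : e (P i) = !c := congrArg Prod.snd hc2'
    exact ⟨by rw [e3, ← e1], by rw [e4, ← e2]⟩
  refine ⟨hev, P, ?_, ?_, fun i => (hlet' i).1, ?_, ?_⟩
  · intro i
    apply Fin.ext
    exact hinv i.val i.isLt
  · intro i h
    exact hne i.val i.isLt (congrArg Fin.val h)
  · intro i
    have h := (hlet' i).2
    rcases hδ i with h1 | h1 <;> rcases hδ (P i) with h2 | h2 <;>
      simp [he, h1, h2] at h ⊢
  · intro i j hipi hjpj hij hjpi
    exact hnc i.val j.val i.isLt j.isLt hipi hjpj hij hjpi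
end

section
/- Let f : G → H and h : G → K be group homomorphisms and A ⊆ G a generating set. The set K(⟨f,h⟩) of ⟨f,h⟩-symmetric paths is a normal subgroup of G. -/
/-- `ga, gb, gc, gd` form an `⟨f,h⟩`-symmetric quadruple with respect to `A`. -/
def IsSymmQuad {G H K : Type*} [Group G] [Group H] [Group K]
    (f : G →* H) (h : G →* K) (A : Set G) (ga gb gc gd : G) : Prop :=
  ∃ (n : ℕ) (a b c d : Fin n → G) (δ : Fin n → ℤ),
    (∀ i, a i ∈ A ∧ b i ∈ A ∧ c i ∈ A ∧ d i ∈ A) ∧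
    (∀ i, f (a i) = f (b i) ∧ f (d i) = f (c i) ∧
          h (a i) = h (d i) ∧ h (b i) = h (c i)) ∧
    (∀ i, δ i = 1 ∨ δ i = -1) ∧
    ga = (List.ofFn fun i => a i ^ δ i).prod ∧
    gb = (List.ofFn fun i => b i ^ δ i).prod ∧
    gc = (List.ofFn fun i => c i ^ δ i).prod ∧
    gd = (List.ofFn fun i => d i ^ δ i).prod

/-- The set of `⟨f,h⟩`-symmetric paths with respect to `A`. -/
def symmPaths2 {G H K : Type*} [Group G] [Group H] [Group K]
    (f : G →* H) (h : G →* K) (A : Set G) : Set G :=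
  {g | ∃ ga gb gc gd : G, IsSymmQuad f h A ga gb gc gd ∧ g = ga * gb⁻¹ * gc * gd⁻¹}

section Aux

variable {G H K : Type*} [Group G] [Group H] [Group K]

/-- List-based version of `IsSymmQuad`. -/
def symmLQ (f : G →* H) (h : G →* K) (A : Set G) (ga gb gc gd : G) : Prop :=
  ∃ L : List ((G × G × G × G) × ℤ),
    (∀ p ∈ L,
      (p.1.1 ∈ A ∧ p.1.2.1 ∈ A ∧ p.1.2.2.1 ∈ A ∧ p.1.2.2.2 ∈ A) ∧
      (f p.1.1 = f p.1.2.1 ∧ f p.1.2.2.2 = f p.1.2.2.1 ∧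
        h p.1.1 = h p.1.2.2.2 ∧ h p.1.2.1 = h p.1.2.2.1) ∧
      (p.2 = 1 ∨ p.2 = -1)) ∧
    ga = (L.map fun p => p.1.1 ^ p.2).prod ∧
    gb = (L.map fun p => p.1.2.1 ^ p.2).prod ∧
    gc = (L.map fun p => p.1.2.2.1 ^ p.2).prod ∧
    gd = (L.map fun p => p.1.2.2.2 ^ p.2).prod

variable {f : G →* H} {h : G →* K} {A : Set G}

private lemma ofFn_get_comp {α β : Type*} (g : α → β) (L : List α) :
    (List.ofFn fun i => g (L.get i)) = L.map g := by
  conv_rhs => rw [← List.ofFn_get L, List.map_ofFn]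
  rfl

lemma isSymmQuad_iff_symmLQ {ga gb gc gd : G} :
    IsSymmQuad f h A ga gb gc gd ↔ symmLQ f h A ga gb gc gd := by
  constructor
  · rintro ⟨n, a, b, c, d, δ, hmem, hrel, hδ, ha, hb, hc, hd⟩
    refine ⟨List.ofFn fun i => ((a i, b i, c i, d i), δ i), ?_, ?_, ?_, ?_, ?_⟩
    · intro p hp
      obtain ⟨i, rfl⟩ := List.mem_ofFn.1 hp
      exact ⟨hmem i, hrel i, hδ i⟩
    all_goals simp only [List.map_ofFn, Function.comp_def]
    exacts [ha, hb, hc, hd]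
  · rintro ⟨L, hL, ha, hb, hc, hd⟩
    refine ⟨L.length, fun i => (L.get i).1.1, fun i => (L.get i).1.2.1,
      fun i => (L.get i).1.2.2.1, fun i => (L.get i).1.2.2.2, fun i => (L.get i).2,
      fun i => (hL _ (L.get_mem i)).1, fun i => (hL _ (L.get_mem i)).2.1,
      fun i => (hL _ (L.get_mem i)).2.2, ?_, ?_, ?_, ?_⟩
    · rw [ofFn_get_comp (fun p => p.1.1 ^ p.2) L]; exact ha
    · rw [ofFn_get_comp (fun p => p.1.2.1 ^ p.2) L]; exact hb
    · rw [ofFn_get_comp (fun p => p.1.2.2.1 ^ p.2) L]; exact hc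
    · rw [ofFn_get_comp (fun p => p.1.2.2.2 ^ p.2) L]; exact hd

lemma symmLQ.one : symmLQ f h A (1 : G) 1 1 1 :=
  ⟨[], by simp, by simp, by simp, by simp, by simp⟩

lemma symmLQ.mul {ga gb gc gd ga' gb' gc' gd' : G}
    (H1 : symmLQ f h A ga gb gc gd) (H2 : symmLQ f h A ga' gb' gc' gd') :
    symmLQ f h A (ga * ga') (gb * gb') (gc * gc') (gd * gd') := by
  obtain ⟨L, hL, rfl, rfl, rfl, rfl⟩ := H1
  obtain ⟨M, hM, rfl, rfl, rfl, rfl⟩ := H2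
  refine ⟨L ++ M, ?_, by simp, by simp, by simp, by simp⟩
  intro p hp
  rcases List.mem_append.1 hp with hp | hp
  exacts [hL p hp, hM p hp]

lemma symmLQ.inv {ga gb gc gd : G} (H1 : symmLQ f h A ga gb gc gd) :
    symmLQ f h A ga⁻¹ gb⁻¹ gc⁻¹ gd⁻¹ := by
  obtain ⟨L, hL, rfl, rfl, rfl, rfl⟩ := H1
  refine ⟨(L.map fun p => (p.1, -p.2)).reverse, ?_, ?_, ?_, ?_, ?_⟩
  · intro p hp
    rw [List.mem_reverse] at hp
    obtain ⟨q, hq, rfl⟩ := List.mem_map.1 hp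
    obtain ⟨hm, hr, hδ⟩ := hL q hq
    exact ⟨hm, hr, by omega⟩
  all_goals
    simp [List.prod_inv_reverse, List.map_reverse, List.map_map, Function.comp_def, zpow_neg]

lemma symmLQ.perm2 {ga gb gc gd : G} (H1 : symmLQ f h A ga gb gc gd) :
    symmLQ f h A gc gd ga gb := by
  obtain ⟨L, hL, rfl, rfl, rfl, rfl⟩ := H1
  refine ⟨L.map fun p => ((p.1.2.2.1, p.1.2.2.2, p.1.1, p.1.2.1), p.2), ?_, ?_, ?_, ?_, ?_⟩
  · intro p hp
    obtain ⟨q, hq, rfl⟩ := List.mem_map.1 hp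
    obtain ⟨⟨m1, m2, m3, m4⟩, ⟨r1, r2, r3, r4⟩, hδ⟩ := hL q hq
    exact ⟨⟨m3, m4, m1, m2⟩, ⟨r2.symm, r1.symm, r4.symm, r3.symm⟩, hδ⟩
  all_goals simp only [List.map_map]; rfl

lemma symmLQ.perm3 {ga gb gc gd : G} (H1 : symmLQ f h A ga gb gc gd) :
    symmLQ f h A gd gc gb ga := by
  obtain ⟨L, hL, rfl, rfl, rfl, rfl⟩ := H1
  refine ⟨L.map fun p => ((p.1.2.2.2, p.1.2.2.1, p.1.2.1, p.1.1), p.2), ?_, ?_, ?_, ?_, ?_⟩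
  · intro p hp
    obtain ⟨q, hq, rfl⟩ := List.mem_map.1 hp
    obtain ⟨⟨m1, m2, m3, m4⟩, ⟨r1, r2, r3, r4⟩, hδ⟩ := hL q hq
    exact ⟨⟨m4, m3, m2, m1⟩, ⟨r2, r1, r3.symm, r4.symm⟩, hδ⟩
  all_goals simp only [List.map_map]; rfl

lemma symmLQ.aadd {ga gb gc gd : G} (H1 : symmLQ f h A ga gb gc gd) :
    symmLQ f h A ga ga gd gd := by
  obtain ⟨L, hL, rfl, rfl, rfl, rfl⟩ := H1
  refine ⟨L.map fun p => ((p.1.1, p.1.1, p.1.2.2.2, p.1.2.2.2), p.2), ?_, ?_, ?_, ?_, ?_⟩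
  · intro p hp
    obtain ⟨q, hq, rfl⟩ := List.mem_map.1 hp
    obtain ⟨⟨m1, m2, m3, m4⟩, ⟨r1, r2, r3, r4⟩, hδ⟩ := hL q hq
    exact ⟨⟨m1, m1, m4, m4⟩, ⟨rfl, rfl, r3, r3⟩, hδ⟩
  all_goals simp only [List.map_map]; rfl

lemma symmLQ.gen {x : G} (hx : x ∈ A) : symmLQ f h A x x x x := by
  refine ⟨[((x, x, x, x), 1)], ?_, by simp, by simp, by simp, by simp⟩
  intro p hp
  simp only [List.mem_singleton] at hp
  subst hp
  exact ⟨⟨hx, hx, hx, hx⟩, ⟨rfl, rfl, rfl, rfl⟩, Or.inl rfl⟩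

lemma symmLQ.diag (hA : Subgroup.closure A = ⊤) (g : G) : symmLQ f h A g g g g := by
  let D : Subgroup G :=
    { carrier := {g | symmLQ f h A g g g g}
      one_mem' := symmLQ.one
      mul_mem' := fun h1 h2 => h1.mul h2
      inv_mem' := fun h1 => h1.inv }
  have hsub : Subgroup.closure A ≤ D :=
    (Subgroup.closure_le D).2 fun x hx => symmLQ.gen hx
  exact hsub (by rw [hA]; trivial)

lemma symmLQ.mem_symmPaths2 {ga gb gc gd : G} (H1 : symmLQ f h A ga gb gc gd) :
    ga * gb⁻¹ * gc * gd⁻¹ ∈ symmPaths2 f h A :=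
  ⟨ga, gb, gc, gd, isSymmQuad_iff_symmLQ.2 H1, rfl⟩

end Aux

theorem symmPaths2_isNormalSubgroup {G H K : Type*} [Group G] [Group H] [Group K]
    (f : G →* H) (h : G →* K) (A : Set G) (hA : Subgroup.closure A = ⊤) :
    ∃ N : Subgroup G, N.Normal ∧ (N : Set G) = symmPaths2 f h A := by
  refine ⟨{ carrier := symmPaths2 f h A
            one_mem' := ?_
            mul_mem' := ?_
            inv_mem' := ?_ }, ⟨?_⟩, rfl⟩
  · rintro x y ⟨ga, gb, gc, gd, hq, rfl⟩ ⟨ga', gb', gc', gd', hq', rfl⟩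
    replace hq := isSymmQuad_iff_symmLQ.1 hq
    replace hq' := isSymmQuad_iff_symmLQ.1 hq'
    set x0 : G := gd' * gc'⁻¹ with hx0
    have key := ((((symmLQ.diag hA x0).mul hq).mul (hq.aadd.inv)).mul hq'.perm2).mul
      (symmLQ.diag hA x0⁻¹)
    have hmem := key.mem_symmPaths2
    have heq : ga * gb⁻¹ * gc * gd⁻¹ * (ga' * gb'⁻¹ * gc' * gd'⁻¹) =
        x0 * ga * ga⁻¹ * gc' * x0⁻¹ * (x0 * gb * ga⁻¹ * gd' * x0⁻¹)⁻¹ *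
          (x0 * gc * gd⁻¹ * ga' * x0⁻¹) * (x0 * gd * gd⁻¹ * gb' * x0⁻¹)⁻¹ := by
      rw [hx0]; group
    rw [heq]
    exact hmem
  · have := (symmLQ.one (f := f) (h := h) (A := A)).mem_symmPaths2
    simpa using this
  · rintro x ⟨ga, gb, gc, gd, hq, rfl⟩
    replace hq := isSymmQuad_iff_symmLQ.1 hq
    have hmem := hq.perm3.mem_symmPaths2
    have heq : (ga * gb⁻¹ * gc * gd⁻¹)⁻¹ = gd * gc⁻¹ * gb * ga⁻¹ := by group
    rw [heq]
    exact hmem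
  · rintro x ⟨ga, gb, gc, gd, hq, rfl⟩ g
    replace hq := isSymmQuad_iff_symmLQ.1 hq
    have key := ((symmLQ.diag hA g).mul hq).mul (symmLQ.diag hA g⁻¹)
    have hmem := key.mem_symmPaths2
    have heq : g * (ga * gb⁻¹ * gc * gd⁻¹) * g⁻¹ =
        g * ga * g⁻¹ * (g * gb * g⁻¹)⁻¹ * (g * gc * g⁻¹) * (g * gd * g⁻¹)⁻¹ := by group
    rw [heq]
    exact hmem
end

section
/- Let f : A → B and h : A → C be surjective functions between sets such that the equivalence relations Eq(f) and Eq(h) commute: Eq(f) ∘ Eq(h) = Eq(h) ∘ Eq(f). Then Ker(F(f)) ∩ Ker(F(h)) equals the set of ⟨F(f),F(h)⟩-symmetric paths in F(A) with respect to the generating set A. -/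
/-- The kernel pair of a function, as a relation. -/
def EqRel {A B : Type*} (f : A → B) : A → A → Prop := fun a b => f a = f b

private lemma mk_singleton_zpow {α : Type*} (x : α) (b : Bool) :
    FreeGroup.mk [(x, b)] = FreeGroup.of x ^ (cond b (1 : ℤ) (-1)) := by
  cases b
  · rw [Bool.cond_false, zpow_neg_one]
    rw [show FreeGroup.of x = FreeGroup.mk [(x, true)] from rfl, FreeGroup.inv_mk]
    simp [FreeGroup.invRev]
  · rw [Bool.cond_true, zpow_one]; rfl

private lemma map_mk_eq_prod {α β : Type*} (φ : α → β) (L : List (α × Bool)) :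
    FreeGroup.map φ (FreeGroup.mk L) =
      (L.map fun q => FreeGroup.of (φ q.1) ^ (cond q.2 (1 : ℤ) (-1))).prod := by
  induction L with
  | nil => simp [← FreeGroup.one_eq_mk]
  | cons q L ih =>
    have h1 : FreeGroup.mk (q :: L) = FreeGroup.mk [q] * FreeGroup.mk L :=
      (FreeGroup.mul_mk (L₁ := [q]) (L₂ := L)).symm
    rw [h1, map_mul, ih, List.map_cons, List.prod_cons]
    congr 1
    rw [show FreeGroup.mk [q] = FreeGroup.of q.1 ^ (cond q.2 (1 : ℤ) (-1)) from
      mk_singleton_zpow q.1 q.2, map_zpow, FreeGroup.map.of]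

private lemma ofFn_word {α β : Type*} (φ : α → β) (L : List (α × Bool)) :
    (List.ofFn fun i : Fin L.length =>
        FreeGroup.of (φ (L.get i).1) ^ (cond (L.get i).2 (1 : ℤ) (-1))).prod =
      FreeGroup.map φ (FreeGroup.mk L) := by
  rw [map_mk_eq_prod]
  congr 1
  exact List.ofFn_getElem_eq_map L fun q => FreeGroup.of (φ q.1) ^ (cond q.2 (1 : ℤ) (-1))

private lemma ofFn_word_id {α : Type*} (L : List (α × Bool)) :
    (List.ofFn fun i : Fin L.length =>
        FreeGroup.of ((L.get i).1) ^ (cond (L.get i).2 (1 : ℤ) (-1))).prod =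
      FreeGroup.mk L := by
  have := ofFn_word (id : α → α) L
  simpa using this

theorem inter_ker_eq_symmPaths2 {A B C : Type} (f : A → B) (h : A → C)
    (hf : Function.Surjective f) (hh : Function.Surjective h)
    (hcomm : Relation.Comp (EqRel f) (EqRel h) = Relation.Comp (EqRel h) (EqRel f)) :
    ((FreeGroup.map f).ker : Set (FreeGroup A)) ∩ ((FreeGroup.map h).ker : Set (FreeGroup A)) =
      symmPaths2 (FreeGroup.map f) (FreeGroup.map h)
        (Set.range (FreeGroup.of : A → FreeGroup A)) := by
  classical
  -- Step 1: construct the section data using surjectivity and permutability.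
  obtain ⟨s₀, t₀, E, P1, P2, P3, P4⟩ :
      ∃ (s₀ : B → A) (t₀ : C → A) (E : B → A),
        (∀ b, f (s₀ b) = b) ∧ (∀ c, h (t₀ c) = c) ∧
        (∀ x, f (t₀ (h x)) = f (E (f x))) ∧
        (∀ x, h (s₀ (f x)) = h (E (f x))) := by
    set r : A → A → Prop := fun x y => ∃ z, f x = f z ∧ h z = h y with hr
    have hc : ∀ x y, r x y ↔ ∃ z, h x = h z ∧ f z = f y := by
      intro x y
      exact iff_of_eq (congrFun (congrFun hcomm x) y)
    have hrefl : ∀ x, r x x := fun x => ⟨x, rfl, rfl⟩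
    have hsymm : ∀ x y, r x y → r y x := by
      intro x y hxy
      obtain ⟨w, hw1, hw2⟩ := (hc x y).1 hxy
      exact ⟨w, hw2.symm, hw1.symm⟩
    have htrans : ∀ x y u, r x y → r y u → r x u := by
      intro x y u hxy hyu
      obtain ⟨z, h1, h2⟩ := hxy
      obtain ⟨z', h3, h4⟩ := hyu
      obtain ⟨v, hv1, hv2⟩ := (hc z z').2 ⟨y, h2, h3⟩
      exact ⟨v, h1.trans hv1, hv2.trans h4⟩
    let sd : Setoid A := ⟨r, ⟨hrefl, fun {x y} hxy => hsymm x y hxy,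
      fun {x y z} hxy hyz => htrans x y z hxy hyz⟩⟩
    let ρ : A → A := fun x => (Quotient.mk sd x).out
    have hρ1 : ∀ x, r (ρ x) x := by
      intro x
      exact Quotient.exact (Quotient.out_eq (Quotient.mk sd x))
    have hρ2 : ∀ x y, r x y → ρ x = ρ y := fun x y hxy =>
      congrArg Quotient.out (Quotient.sound hxy)
    let s_f : B → A := Function.surjInv hf
    let t_h : C → A := Function.surjInv hh
    have hs_f : ∀ b, f (s_f b) = b := fun b => Function.surjInv_eq hf b
    have ht_h : ∀ c, h (t_h c) = c := fun c => Function.surjInv_eq hh c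
    have ht : ∀ c' : C, ∃ a', f a' = f (ρ (t_h c')) ∧ h a' = c' := by
      intro c'
      obtain ⟨z, hz1, hz2⟩ := hρ1 (t_h c')
      exact ⟨z, hz1.symm, hz2.trans (ht_h c')⟩
    choose t₀ ht1 ht2 using ht
    have hs : ∀ b' : B, ∃ a', f a' = b' ∧ h a' = h (ρ (s_f b')) := by
      intro b'
      obtain ⟨z, hz1, hz2⟩ := hsymm _ _ (hρ1 (s_f b'))
      exact ⟨z, hz1.symm.trans (hs_f b'), hz2⟩
    choose s₀ hs1 hs2 using hs
    have hEf : ∀ x, ρ (s_f (f x)) = ρ x := fun x => hρ2 _ _ ⟨x, hs_f (f x), rfl⟩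
    have hth : ∀ x, ρ (t_h (h x)) = ρ x := fun x => hρ2 _ _ ⟨t_h (h x), rfl, ht_h (h x)⟩
    refine ⟨s₀, t₀, fun b' => ρ (s_f b'), hs1, ht2, ?_, ?_⟩
    · intro x
      rw [ht1, hth]
      exact congrArg f (hEf x).symm
    · intro x
      exact hs2 (f x)
  -- Step 2: prove the set equality.
  apply Set.Subset.antisymm
  · rintro g ⟨hg1, hg2⟩
    have hg1' : FreeGroup.map f g = 1 := hg1
    have hg2' : FreeGroup.map h g = 1 := hg2
    refine ⟨g, 1, 1, 1,
      ⟨g.toWord.length,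
       (fun i => FreeGroup.of ((g.toWord.get i).1)),
       (fun i => FreeGroup.of (s₀ (f (g.toWord.get i).1))),
       (fun i => FreeGroup.of (E (f (g.toWord.get i).1))),
       (fun i => FreeGroup.of (t₀ (h (g.toWord.get i).1))),
       (fun i => cond (g.toWord.get i).2 (1 : ℤ) (-1)),
       fun i => ⟨⟨_, rfl⟩, ⟨_, rfl⟩, ⟨_, rfl⟩, ⟨_, rfl⟩⟩,
       fun i => ⟨?_, ?_, ?_, ?_⟩,
       fun i => ?_, ?_, ?_, ?_, ?_⟩, by simp⟩
    · rw [FreeGroup.map.of, FreeGroup.map.of, P1]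
    · rw [FreeGroup.map.of, FreeGroup.map.of, P3]
    · rw [FreeGroup.map.of, FreeGroup.map.of, P2]
    · rw [FreeGroup.map.of, FreeGroup.map.of, P4]
    · simp only [List.get_eq_getElem]
      cases hb : g.toWord[(i : ℕ)].2 <;> simp [hb]
    · -- ga = g
      have e := ofFn_word_id g.toWord
      rw [FreeGroup.mk_toWord] at e
      exact e.symm
    · -- gb = 1
      have e := ofFn_word (fun x => s₀ (f x)) g.toWord
      rw [FreeGroup.mk_toWord, show FreeGroup.map (fun x => s₀ (f x)) g =
        FreeGroup.map s₀ (FreeGroup.map f g) from (FreeGroup.map.comp f s₀ g).symm,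
        hg1', map_one] at e
      exact e.symm
    · -- gc = 1
      have e := ofFn_word (fun x => E (f x)) g.toWord
      rw [FreeGroup.mk_toWord, show FreeGroup.map (fun x => E (f x)) g =
        FreeGroup.map E (FreeGroup.map f g) from (FreeGroup.map.comp f E g).symm,
        hg1', map_one] at e
      exact e.symm
    · -- gd = 1
      have e := ofFn_word (fun x => t₀ (h x)) g.toWord
      rw [FreeGroup.mk_toWord, show FreeGroup.map (fun x => t₀ (h x)) g =
        FreeGroup.map t₀ (FreeGroup.map h g) from (FreeGroup.map.comp h t₀ g).symm,
        hg2', map_one] at e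
      exact e.symm
  · rintro g ⟨ga, gb, gc, gd, ⟨n, a, b, c, d, δ, -, hrel, -, hA, hB, hC, hD⟩, rfl⟩
    have push : ∀ {β : Type} (φ : FreeGroup A →* FreeGroup β) (u : Fin n → FreeGroup A),
        φ (List.ofFn fun i => u i ^ δ i).prod = (List.ofFn fun i => φ (u i) ^ δ i).prod := by
      intro β φ u
      rw [map_list_prod, List.map_ofFn]
      congr 1
      exact congrArg List.ofFn (funext fun i => map_zpow φ (u i) (δ i))
    have hfa : FreeGroup.map f ga = FreeGroup.map f gb := by
      rw [hA, hB, push, push]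
      exact congrArg List.prod (congrArg List.ofFn (funext fun i => by rw [(hrel i).1]))
    have hfdc : FreeGroup.map f gd = FreeGroup.map f gc := by
      rw [hD, hC, push, push]
      exact congrArg List.prod (congrArg List.ofFn (funext fun i => by rw [(hrel i).2.1]))
    have hhad : FreeGroup.map h ga = FreeGroup.map h gd := by
      rw [hA, hD, push, push]
      exact congrArg List.prod (congrArg List.ofFn (funext fun i => by rw [(hrel i).2.2.1]))
    have hhbc : FreeGroup.map h gb = FreeGroup.map h gc := by
      rw [hB, hC, push, push]
      exact congrArg List.prod (congrArg List.ofFn (funext fun i => by rw [(hrel i).2.2.2]))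
    constructor
    · show FreeGroup.map f (ga * gb⁻¹ * gc * gd⁻¹) = 1
      rw [map_mul, map_mul, map_mul, map_inv, map_inv, hfa, hfdc]
      group
    · show FreeGroup.map h (ga * gb⁻¹ * gc * gd⁻¹) = 1
      rw [map_mul, map_mul, map_mul, map_inv, map_inv, hhad, ← hhbc]
      group
end

section
/- Consider a commutative square of surjective functions f₁ : A₁ → B₁, f_G : A₁ → A₀, f_H : B₁ → B₀, f₀ : A₀ → B₀ (with f₀ ∘ f_G = f_H ∘ f₁) such that the induced map p : A₁ → P = {(a,b) ∈ A₀ × B₁ : f₀(a) = f_H(b)}, p(x) = (f_G(x), f₁(x)), is surjective. Then the kernel pairs Eq(f₁) and Eq(f_G) commute: Eq(f₁) ∘ Eq(f_G) = Eq(f_G) ∘ Eq(f₁). -/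
theorem kernelPairs_commute_of_doubleExtension
    {A₁ B₁ A₀ B₀ : Type*} (f₁ : A₁ → B₁) (fG : A₁ → A₀) (fH : B₁ → B₀) (f₀ : A₀ → B₀)
    (hf₁ : Function.Surjective f₁) (hfG : Function.Surjective fG)
    (hfH : Function.Surjective fH) (hf₀ : Function.Surjective f₀)
    (hsq : ∀ x : A₁, f₀ (fG x) = fH (f₁ x))
    (hp : ∀ (a : A₀) (b : B₁), f₀ a = fH b → ∃ x : A₁, fG x = a ∧ f₁ x = b) :
    Relation.Comp (EqRel f₁) (EqRel fG) = Relation.Comp (EqRel fG) (EqRel f₁) := by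
  ext a b
  constructor
  · rintro ⟨c, h1, h2⟩
    obtain ⟨d, hd1, hd2⟩ := hp (fG a) (f₁ b) (by
      rw [hsq a, h1, ← hsq c, h2, hsq b])
    exact ⟨d, hd1.symm, hd2⟩
  · rintro ⟨c, h1, h2⟩
    obtain ⟨d, hd1, hd2⟩ := hp (fG b) (f₁ a) (by
      rw [hsq b, ← h2, ← hsq c, ← h1, hsq a])
    exact ⟨d, hd2.symm, hd1⟩
end

section
/- Let h : A → B be a function, G' a group, and consider the homomorphism F(h) × id : F(A) × G' → F(B) × G'. Then Ker(F(h) × id) = Ker(F(h)) × {e}, and this equals the set of (F(h) × id)-symmetric paths with respect to the subset A × {e} of F(A) × G'. -/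
private lemma mk_eq_prod {A : Type} (L : List (A × Bool)) :
    FreeGroup.mk L = (L.map fun p => FreeGroup.of p.1 ^ (if p.2 then (1:ℤ) else -1)).prod := by
  induction L with
  | nil => simp [← FreeGroup.one_eq_mk]
  | cons p L ih =>
    rw [show p :: L = [p] ++ L from rfl, ← FreeGroup.mul_mk, ih, List.map_append,
      List.prod_append, List.map_singleton, List.prod_singleton]
    congr 1
    obtain ⟨a, b⟩ := p
    cases b
    · show FreeGroup.mk [(a, false)] = FreeGroup.of a ^ (-1 : ℤ)
      rw [zpow_neg_one]
      show FreeGroup.mk [(a, false)] = (FreeGroup.mk [(a, true)])⁻¹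
      rw [FreeGroup.inv_mk]
      rfl
    · show FreeGroup.mk [(a, true)] = FreeGroup.of a ^ (1 : ℤ)
      rw [zpow_one]; rfl

private lemma prod_ofFn_eq {A : Type} (G' : Type) [Group G'] (L : List (A × Bool)) (s : A → A) :
    (List.ofFn fun i : Fin L.length =>
        ((FreeGroup.of (s (L.get i).1), (1 : G')) : FreeGroup A × G')
          ^ (if (L.get i).2 then (1 : ℤ) else -1)).prod
      = (FreeGroup.map s (FreeGroup.mk L), 1) := by
  set φ := MonoidHom.inl (FreeGroup A) G' with hφ
  have h1 : (fun i : Fin L.length =>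
      ((FreeGroup.of (s (L.get i).1), (1 : G')) : FreeGroup A × G')
        ^ (if (L.get i).2 then (1 : ℤ) else -1))
      = φ ∘ (fun i : Fin L.length =>
        FreeGroup.of (s (L.get i).1) ^ (if (L.get i).2 then (1 : ℤ) else -1)) := by
    funext i
    simp only [Function.comp_apply, map_zpow, MonoidHom.inl_apply, φ]
  rw [h1, ← List.map_ofFn, ← map_list_prod]
  have h2 : (fun i : Fin L.length =>
      FreeGroup.of (s (L.get i).1) ^ (if (L.get i).2 then (1 : ℤ) else -1))
      = (fun p : A × Bool => FreeGroup.of p.1 ^ (if p.2 then (1 : ℤ) else -1))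
        ∘ (fun p : A × Bool => (s p.1, p.2)) ∘ L.get := by
    funext i; rfl
  rw [h2, show ((fun p : A × Bool => FreeGroup.of p.1 ^ (if p.2 then (1 : ℤ) else -1))
        ∘ (fun p : A × Bool => (s p.1, p.2)) ∘ L.get)
      = ((fun p : A × Bool => FreeGroup.of p.1 ^ (if p.2 then (1 : ℤ) else -1))
        ∘ (fun p : A × Bool => (s p.1, p.2))) ∘ L.get from rfl,
    ← List.map_ofFn, List.ofFn_get, ← List.map_map, ← mk_eq_prod, ← FreeGroup.map.mk]
  simp [φ]


theorem ker_prodMap_eq_symmPaths {A B : Type} (h : A → B) (G' : Type) [Group G'] :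
    (((FreeGroup.map h).prodMap (MonoidHom.id G')).ker : Set (FreeGroup A × G')) =
        ((FreeGroup.map h).ker : Set (FreeGroup A)) ×ˢ ({1} : Set G') ∧
    (((FreeGroup.map h).prodMap (MonoidHom.id G')).ker : Set (FreeGroup A × G')) =
      symmPaths ((FreeGroup.map h).prodMap (MonoidHom.id G'))
        ((Set.range (FreeGroup.of : A → FreeGroup A)) ×ˢ ({1} : Set G')) := by
  classical
  set f := (FreeGroup.map h).prodMap (MonoidHom.id G') with hf
  constructor
  · ext ⟨x, g⟩
    simp only [SetLike.mem_coe, MonoidHom.mem_ker, f, MonoidHom.coe_prodMap, Prod.map_apply,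
      MonoidHom.id_apply, Prod.mk_eq_one, Set.mem_prod, Set.mem_singleton_iff]
  · apply Set.Subset.antisymm
    · -- ker ⊆ symmPaths
      rintro ⟨x, g⟩ hx
      have hx' : FreeGroup.map h x = 1 ∧ g = 1 := by
        simpa [f, MonoidHom.mem_ker, Prod.ext_iff] using hx
      obtain ⟨hx1, rfl⟩ := hx'
      by_cases hA : Nonempty A
      · -- nonempty case
        haveI := hA
        set r : A → A := Function.invFun h ∘ h with hr
        have hhr : ∀ a, h (r a) = h a := fun a => Function.invFun_eq ⟨a, rfl⟩
        have hrx : FreeGroup.map r x = 1 := by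
          rw [hr, ← FreeGroup.map.comp, hx1, map_one]
        set L := x.toWord with hL
        refine ⟨(x, 1), (1, 1),
          ⟨L.length,
            (fun i => (FreeGroup.of (L.get i).1, 1)),
            (fun i => (FreeGroup.of (r (L.get i).1), 1)),
            (fun i => if (L.get i).2 then (1 : ℤ) else -1), ?_, ?_, ?_⟩, by simp⟩
        · intro i
          refine ⟨⟨⟨_, rfl⟩, rfl⟩, ⟨⟨_, rfl⟩, rfl⟩, ?_, ?_⟩
          · simp [f, hhr]
          · dsimp only
            split <;> simp
        · have := prod_ofFn_eq G' L id
          rw [FreeGroup.map.id, hL, FreeGroup.mk_toWord] at this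
          exact this.symm
        · have := prod_ofFn_eq G' L r
          rw [hL, FreeGroup.mk_toWord, hrx] at this
          exact this.symm
      · -- empty case : x = 1
        have hx0 : x = 1 := by
          have hLnil : x.toWord = [] := by
            cases hLl : x.toWord with
            | nil => rfl
            | cons p t => exact absurd ⟨p.1⟩ hA
          rw [← FreeGroup.mk_toWord (x := x), hLnil, ← FreeGroup.one_eq_mk]
        subst hx0
        exact ⟨1, 1, ⟨0, Fin.elim0, Fin.elim0, Fin.elim0, fun i => i.elim0, by simp, by simp⟩,
          by simp⟩
    · -- symmPaths ⊆ ker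
      rintro g ⟨ga, gb, ⟨n, a, b, δ, hab, hga, hgb⟩, rfl⟩
      have key : f ga = f gb := by
        rw [hga, hgb, map_list_prod, map_list_prod, List.map_ofFn, List.map_ofFn]
        have he : (⇑f ∘ fun i => a i ^ δ i) = (⇑f ∘ fun i => b i ^ δ i) := by
          funext i
          simp only [Function.comp_apply, map_zpow, (hab i).2.2.1]
        rw [he]
      simp [MonoidHom.mem_ker, key]
end

section
/- Let f : G → H and h : G → K be group homomorphisms and A ⊆ G a generating set. The set of ⟨f,h⟩-symmetric paths contains the normal closure in G of the set { a·b⁻¹·c·d⁻¹ | (a,b,c,d) ∈ A⁴, f(a)=f(b), f(d)=f(c), h(a)=h(d), h(b)=h(c) }. -/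
namespace SymmAux

variable {G H K : Type*} [Group G] [Group H] [Group K]

/-- An item: a quadruple of generators with an exponent. -/
abbrev Item (G : Type*) := (G × G × G × G) × ℤ

variable (f : G →* H) (h : G →* K) (A : Set G)

def okItem (p : Item G) : Prop :=
  p.1.1 ∈ A ∧ p.1.2.1 ∈ A ∧ p.1.2.2.1 ∈ A ∧ p.1.2.2.2 ∈ A ∧
  f p.1.1 = f p.1.2.1 ∧ f p.1.2.2.2 = f p.1.2.2.1 ∧
  h p.1.1 = h p.1.2.2.2 ∧ h p.1.2.1 = h p.1.2.2.1 ∧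
  (p.2 = 1 ∨ p.2 = -1)

def word (w : G × G × G × G → G) (L : List (Item G)) : G :=
  (L.map fun p => w p.1 ^ p.2).prod

def negRev (L : List (Item G)) : List (Item G) :=
  (L.map fun p => (p.1, -p.2)).reverse

def mapq (σ : G × G × G × G → G × G × G × G) (L : List (Item G)) : List (Item G) :=
  L.map fun p => (σ p.1, p.2)

lemma word_nil (w : G × G × G × G → G) : word w ([] : List (Item G)) = 1 := rfl

lemma word_append (w : G × G × G × G → G) (L1 L2 : List (Item G)) :
    word w (L1 ++ L2) = word w L1 * word w L2 := by
  simp [word]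

lemma word_negRev' (w : G × G × G × G → G) :
    ∀ L : List (Item G), word w (negRev L) = (word w L)⁻¹
  | [] => by simp [word, negRev]
  | p :: t => by
      have h1 : negRev (p :: t) = negRev t ++ [(p.1, -p.2)] := by
        simp [negRev]
      rw [h1, word_append, word_negRev' w t]
      simp [word, zpow_neg]

lemma word_mapq (w : G × G × G × G → G) (σ : G × G × G × G → G × G × G × G)
    (L : List (Item G)) : word w (mapq σ L) = word (fun q => w (σ q)) L := by
  simp only [word, mapq, List.map_map]
  rfl

lemma mem_negRev {L : List (Item G)} {p : Item G} (hp : p ∈ negRev L) :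
    ∃ q ∈ L, p = (q.1, -q.2) := by
  simp only [negRev, List.mem_reverse, List.mem_map] at hp
  obtain ⟨q, hq, rfl⟩ := hp
  exact ⟨q, hq, rfl⟩

lemma mem_mapq {σ : G × G × G × G → G × G × G × G} {L : List (Item G)} {p : Item G}
    (hp : p ∈ mapq σ L) : ∃ q ∈ L, p = (σ q.1, q.2) := by
  simp only [mapq, List.mem_map] at hp
  obtain ⟨q, hq, rfl⟩ := hp
  exact ⟨q, hq, rfl⟩

/-- The underlying set, in list form. -/
def SPcarrier : Set G :=
  {g | ∃ L : List (Item G), (∀ p ∈ L, okItem f h A p) ∧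
    g = word (fun q => q.1) L * (word (fun q => q.2.1) L)⁻¹ *
        word (fun q => q.2.2.1) L * (word (fun q => q.2.2.2) L)⁻¹}

lemma ok_negRev {L : List (Item G)} (hL : ∀ p ∈ L, okItem f h A p) :
    ∀ p ∈ negRev L, okItem f h A p := by
  intro p hp
  obtain ⟨q, hq, rfl⟩ := mem_negRev hp
  obtain ⟨h1, h2, h3, h4, h5, h6, h7, h8, h9⟩ := hL q hq
  exact ⟨h1, h2, h3, h4, h5, h6, h7, h8, by omega⟩

lemma mul_mem_SP {x y : G} (hx : x ∈ SPcarrier f h A) (hy : y ∈ SPcarrier f h A) :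
    x * y ∈ SPcarrier f h A := by
  obtain ⟨L1, hok1, rfl⟩ := hx
  obtain ⟨L2, hok2, rfl⟩ := hy
  refine ⟨mapq (fun q => (q.2.2.2, q.2.2.2, q.2.2.2, q.2.2.2)) L2
    ++ negRev (mapq (fun q => (q.2.2.1, q.2.2.1, q.2.2.1, q.2.2.1)) L2)
    ++ L1
    ++ negRev (mapq (fun q => (q.1, q.1, q.2.2.2, q.2.2.2)) L1)
    ++ mapq (fun q => (q.2.2.1, q.2.2.2, q.1, q.2.1)) L2, ?_, ?_⟩
  · intro p hp
    simp only [List.mem_append] at hp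
    rcases hp with ((((hp | hp) | hp) | hp) | hp)
    · obtain ⟨q, hq, rfl⟩ := mem_mapq hp
      obtain ⟨h1, h2, h3, h4, h5, h6, h7, h8, h9⟩ := hok2 q hq
      exact ⟨h4, h4, h4, h4, rfl, rfl, rfl, rfl, h9⟩
    · refine ok_negRev f h A ?_ p hp
      intro r hr
      obtain ⟨q, hq, rfl⟩ := mem_mapq hr
      obtain ⟨h1, h2, h3, h4, h5, h6, h7, h8, h9⟩ := hok2 q hq
      exact ⟨h3, h3, h3, h3, rfl, rfl, rfl, rfl, h9⟩
    · exact hok1 p hp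
    · refine ok_negRev f h A ?_ p hp
      intro r hr
      obtain ⟨q, hq, rfl⟩ := mem_mapq hr
      obtain ⟨h1, h2, h3, h4, h5, h6, h7, h8, h9⟩ := hok1 q hq
      exact ⟨h1, h1, h4, h4, rfl, rfl, h7, h7, h9⟩
    · obtain ⟨q, hq, rfl⟩ := mem_mapq hp
      obtain ⟨h1, h2, h3, h4, h5, h6, h7, h8, h9⟩ := hok2 q hq
      exact ⟨h3, h4, h1, h2, h6.symm, h5.symm, h8.symm, h7.symm, h9⟩
  · simp only [word_append, word_negRev', word_mapq]
    group

lemma one_mem_SP : (1 : G) ∈ SPcarrier f h A :=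
  ⟨[], by simp, by simp [word_nil]⟩

lemma inv_mem_SP {x : G} (hx : x ∈ SPcarrier f h A) : x⁻¹ ∈ SPcarrier f h A := by
  obtain ⟨L, hok, rfl⟩ := hx
  refine ⟨mapq (fun q => (q.2.2.2, q.2.2.1, q.2.1, q.1)) L, ?_, ?_⟩
  · intro p hp
    obtain ⟨q, hq, rfl⟩ := mem_mapq hp
    obtain ⟨h1, h2, h3, h4, h5, h6, h7, h8, h9⟩ := hok q hq
    exact ⟨h4, h3, h2, h1, h6, h5, h7.symm, h8.symm, h9⟩
  · simp only [word_mapq]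
    group

/-- The subgroup of symmetric paths (list form). -/
def SP : Subgroup G where
  carrier := SPcarrier f h A
  one_mem' := one_mem_SP f h A
  mul_mem' := mul_mem_SP f h A
  inv_mem' := inv_mem_SP f h A

lemma diag_mem (hA : Subgroup.closure A = ⊤) (g : G) :
    ∃ L : List (Item G), (∀ p ∈ L, okItem f h A p) ∧
      word (fun q => q.1) L = g ∧ word (fun q => q.2.1) L = g ∧
      word (fun q => q.2.2.1) L = g ∧ word (fun q => q.2.2.2) L = g := by
  have hg : g ∈ Subgroup.closure A := by rw [hA]; trivial
  induction hg using Subgroup.closure_induction with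
  | mem x hx =>
      refine ⟨[((x, x, x, x), 1)], ?_, ?_, ?_, ?_, ?_⟩
      · intro p hp
        simp only [List.mem_singleton] at hp
        subst hp
        exact ⟨hx, hx, hx, hx, rfl, rfl, rfl, rfl, Or.inl rfl⟩
      all_goals simp [word]
  | one => exact ⟨[], by simp, by simp [word_nil], by simp [word_nil],
      by simp [word_nil], by simp [word_nil]⟩
  | mul x y hxc hyc hx hy =>
      obtain ⟨Lx, hokx, ha1, hb1, hc1, hd1⟩ := hx
      obtain ⟨Ly, hoky, ha2, hb2, hc2, hd2⟩ := hy
      refine ⟨Lx ++ Ly, ?_, ?_, ?_, ?_, ?_⟩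
      · intro p hp
        rcases List.mem_append.mp hp with hp | hp
        · exact hokx p hp
        · exact hoky p hp
      all_goals simp [word_append, ha1, hb1, hc1, hd1, ha2, hb2, hc2, hd2]
  | inv x hxc hx =>
      obtain ⟨Lx, hokx, ha1, hb1, hc1, hd1⟩ := hx
      exact ⟨negRev Lx, ok_negRev f h A hokx,
        by simp [word_negRev', ha1], by simp [word_negRev', hb1],
        by simp [word_negRev', hc1], by simp [word_negRev', hd1]⟩

theorem SP_normal (hA : Subgroup.closure A = ⊤) : (SP f h A).Normal := by
  constructor
  intro n hn g
  obtain ⟨L, hok, rfl⟩ := hn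
  obtain ⟨Lg, hokg, ha, hb, hc, hd⟩ := diag_mem f h A hA g
  refine ⟨Lg ++ L ++ negRev Lg, ?_, ?_⟩
  · intro p hp
    simp only [List.mem_append] at hp
    rcases hp with (hp | hp) | hp
    · exact hokg p hp
    · exact hok p hp
    · exact ok_negRev f h A hokg p hp
  · simp only [word_append, word_negRev', ha, hb, hc, hd]
    group

lemma ofFn_eq_map (F : Item G → G) (L : List (Item G)) :
    (List.ofFn fun i => F (L.get i)) = L.map F := by
  conv_rhs => rw [← List.ofFn_get L]
  rw [List.map_ofFn]
  rfl

lemma SP_subset_symmPaths2 : (SP f h A : Set G) ⊆ symmPaths2 f h A := by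
  rintro x ⟨L, hok, rfl⟩
  refine ⟨word (fun q => q.1) L, word (fun q => q.2.1) L,
    word (fun q => q.2.2.1) L, word (fun q => q.2.2.2) L, ?_, rfl⟩
  refine ⟨L.length, fun i => (L.get i).1.1, fun i => (L.get i).1.2.1,
    fun i => (L.get i).1.2.2.1, fun i => (L.get i).1.2.2.2, fun i => (L.get i).2,
    ?_, ?_, ?_, ?_, ?_, ?_, ?_⟩
  · intro i
    obtain ⟨h1, h2, h3, h4, _⟩ := hok _ (L.get_mem i)
    exact ⟨h1, h2, h3, h4⟩
  · intro i
    obtain ⟨_, _, _, _, h5, h6, h7, h8, _⟩ := hok _ (L.get_mem i)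
    exact ⟨h5, h6, h7, h8⟩
  · intro i
    obtain ⟨_, _, _, _, _, _, _, _, h9⟩ := hok _ (L.get_mem i)
    exact h9
  · rw [word, ← ofFn_eq_map (fun p => p.1.1 ^ p.2)]
  · rw [word, ← ofFn_eq_map (fun p => p.1.2.1 ^ p.2)]
  · rw [word, ← ofFn_eq_map (fun p => p.1.2.2.1 ^ p.2)]
  · rw [word, ← ofFn_eq_map (fun p => p.1.2.2.2 ^ p.2)]

end SymmAux

theorem normalClosure_subset_symmPaths2 {G H K : Type*} [Group G] [Group H] [Group K]
    (f : G →* H) (h : G →* K) (A : Set G) (hA : Subgroup.closure A = ⊤) :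
    (Subgroup.normalClosure
      {x : G | ∃ a b c d : G, a ∈ A ∧ b ∈ A ∧ c ∈ A ∧ d ∈ A ∧
        f a = f b ∧ f d = f c ∧ h a = h d ∧ h b = h c ∧
        x = a * b⁻¹ * c * d⁻¹} : Set G) ⊆ symmPaths2 f h A := by
  have hnormal := SymmAux.SP_normal f h A hA
  have hsub : {x : G | ∃ a b c d : G, a ∈ A ∧ b ∈ A ∧ c ∈ A ∧ d ∈ A ∧
      f a = f b ∧ f d = f c ∧ h a = h d ∧ h b = h c ∧
      x = a * b⁻¹ * c * d⁻¹} ⊆ (SymmAux.SP f h A : Set G) := by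
    rintro x ⟨a, b, c, d, ha, hb, hc, hd, h5, h6, h7, h8, rfl⟩
    refine ⟨[((a, b, c, d), 1)], ?_, ?_⟩
    · intro p hp
      simp only [List.mem_singleton] at hp
      subst hp
      exact ⟨ha, hb, hc, hd, h5, h6, h7, h8, Or.inl rfl⟩
    · simp [SymmAux.word]
  have hle : Subgroup.normalClosure {x : G | ∃ a b c d : G, a ∈ A ∧ b ∈ A ∧ c ∈ A ∧ d ∈ A ∧
      f a = f b ∧ f d = f c ∧ h a = h d ∧ h b = h c ∧
      x = a * b⁻¹ * c * d⁻¹} ≤ SymmAux.SP f h A :=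
    Subgroup.normalClosure_le_normal hsub
  exact fun x hx => SymmAux.SP_subset_symmPaths2 f h A (hle hx)
end
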